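/- Let ρ be a state and σ a positive definite matrix on ℂ^d, and let ε ∈ (0,1). Then D̲_s^ε(ρ‖σ) = D̄_s^{1−ε}(ρ‖σ). -/

import Mathlib

open Matrix
open scoped ComplexOrder

noncomputable section

/-- Positive part `C₊` of a Hermitian matrix, obtained by applying `x ↦ max x 0` to the
eigenvalues in a spectral decomposition (junk value `0` for non-Hermitian input). -/
def matPos {n : Type*} [Fintype n] [DecidableEq n] (A : Matrix n n ℂ) : Matrix n n ℂ :=
  if hA : A.IsHermitian then
    (hA.eigenvectorUnitary : Matrix n n ℂ) *
      Matrix.diagonal (fun i => ((max (hA.eigenvalues i) 0 : ℝ) : ℂ)) *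
      star (hA.eigenvectorUnitary : Matrix n n ℂ)
  else 0

/-- `Tr C₊` as a real number. -/
def trPos {n : Type*} [Fintype n] [DecidableEq n] (A : Matrix n n ℂ) : ℝ :=
  (matPos A).trace.re

/-- Spectral projection of a Hermitian matrix onto `[0, ∞)` (junk value `0` for
non-Hermitian input). -/
def projNonneg {n : Type*} [Fintype n] [DecidableEq n] (A : Matrix n n ℂ) : Matrix n n ℂ :=
  if hA : A.IsHermitian then
    (hA.eigenvectorUnitary : Matrix n n ℂ) *
      Matrix.diagonal (fun i => if 0 ≤ hA.eigenvalues i then (1 : ℂ) else 0) *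
      star (hA.eigenvectorUnitary : Matrix n n ℂ)
  else 0

/-- The information spectrum relative entropy `D̲_s^ε(ρ‖σ)`. -/
def Dlow {n : Type*} [Fintype n] [DecidableEq n] (ε : ℝ) (ρ σ : Matrix n n ℂ) : ℝ :=
  sSup {γ : ℝ | 1 - ε ≤ trPos (ρ - (2 : ℝ) ^ γ • σ)}

/-- The information spectrum relative entropy `D̄_s^ε(ρ‖σ)`. -/
def Dhigh {n : Type*} [Fintype n] [DecidableEq n] (ε : ℝ) (ρ σ : Matrix n n ℂ) : ℝ :=
  sInf {γ : ℝ | trPos (ρ - (2 : ℝ) ^ γ • σ) ≤ ε}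

section helpers

variable {n : Type*} [Fintype n] [DecidableEq n]

lemma aux_star_mul_self (U : Matrix.unitaryGroup n ℂ) :
    star (U : Matrix n n ℂ) * (U : Matrix n n ℂ) = 1 :=
  Matrix.mem_unitaryGroup_iff'.mp U.2

lemma aux_mul_star_self (U : Matrix.unitaryGroup n ℂ) :
    (U : Matrix n n ℂ) * star (U : Matrix n n ℂ) = 1 :=
  Matrix.mem_unitaryGroup_iff.mp U.2

lemma aux_trace_conj_diag (U : Matrix.unitaryGroup n ℂ) (f : n → ℂ) :
    ((U : Matrix n n ℂ) * Matrix.diagonal f * star (U : Matrix n n ℂ)).trace = ∑ i, f i := by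
  rw [Matrix.trace_mul_cycle, aux_star_mul_self, Matrix.one_mul, Matrix.trace_diagonal]

lemma aux_trace_eq_sum_eig {A : Matrix n n ℂ} (hA : A.IsHermitian) :
    A.trace = ∑ i, (hA.eigenvalues i : ℂ) := by
  conv_lhs => rw [hA.spectral_theorem]
  rw [Unitary.conjStarAlgAut_apply, aux_trace_conj_diag]
  rfl

lemma aux_trPos_eq_sum {A : Matrix n n ℂ} (hA : A.IsHermitian) :
    trPos A = ∑ i, max (hA.eigenvalues i) 0 := by
  rw [trPos, matPos, dif_pos hA, aux_trace_conj_diag, Complex.re_sum]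
  simp

lemma aux_conj_diag_posSemidef (U : Matrix.unitaryGroup n ℂ) {f : n → ℂ} (hf : ∀ i, 0 ≤ f i) :
    (((U : Matrix n n ℂ) * Matrix.diagonal f * star (U : Matrix n n ℂ))).PosSemidef := by
  rw [Matrix.star_eq_conjTranspose]
  exact (Matrix.PosSemidef.diagonal hf).mul_mul_conjTranspose_same _

lemma aux_conj_sub_conj (U : Matrix.unitaryGroup n ℂ) (f g : n → ℂ) :
    (U : Matrix n n ℂ) * Matrix.diagonal f * star (U : Matrix n n ℂ)
      - (U : Matrix n n ℂ) * Matrix.diagonal g * star (U : Matrix n n ℂ)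
      = (U : Matrix n n ℂ) * Matrix.diagonal (f - g) * star (U : Matrix n n ℂ) := by
  rw [← Matrix.sub_mul, ← Matrix.mul_sub]
  congr 2
  ext i j
  by_cases h : i = j <;> simp [Matrix.diagonal_apply, h]

lemma aux_matPos_posSemidef {A : Matrix n n ℂ} (hA : A.IsHermitian) :
    (matPos A).PosSemidef := by
  rw [matPos, dif_pos hA]
  exact aux_conj_diag_posSemidef _ fun i => Complex.zero_le_real.2 (le_max_right _ _)

lemma aux_matPos_sub_posSemidef {A : Matrix n n ℂ} (hA : A.IsHermitian) :
    (matPos A - A).PosSemidef := by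
  have h : matPos A - A = (hA.eigenvectorUnitary : Matrix n n ℂ) *
      Matrix.diagonal ((fun i => ((max (hA.eigenvalues i) 0 : ℝ) : ℂ))
        - (fun i => (hA.eigenvalues i : ℂ))) *
      star (hA.eigenvectorUnitary : Matrix n n ℂ) := by
    rw [← aux_conj_sub_conj, matPos, dif_pos hA]
    congr 1
    conv_lhs => rw [hA.spectral_theorem]
    rfl
  rw [h]
  refine aux_conj_diag_posSemidef _ fun i => ?_
  simp only [Pi.sub_apply]
  rw [← Complex.ofReal_sub]
  exact Complex.zero_le_real.2 (by simp [le_max_left])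

lemma aux_projNonneg_posSemidef {A : Matrix n n ℂ} (hA : A.IsHermitian) :
    (projNonneg A).PosSemidef := by
  rw [projNonneg, dif_pos hA]
  refine aux_conj_diag_posSemidef _ fun i => ?_
  split_ifs <;> simp

lemma aux_one_sub_projNonneg_posSemidef {A : Matrix n n ℂ} (hA : A.IsHermitian) :
    ((1 : Matrix n n ℂ) - projNonneg A).PosSemidef := by
  have h1 : (1 : Matrix n n ℂ) = (hA.eigenvectorUnitary : Matrix n n ℂ) *
      Matrix.diagonal (fun _ => (1 : ℂ)) * star (hA.eigenvectorUnitary : Matrix n n ℂ) := by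
    rw [Matrix.diagonal_one, Matrix.mul_one, aux_mul_star_self]
  rw [projNonneg, dif_pos hA, h1, aux_conj_sub_conj]
  refine aux_conj_diag_posSemidef _ fun i => ?_
  simp only [Pi.sub_apply]
  split_ifs <;> simp

lemma aux_proj_mul_eq_matPos {A : Matrix n n ℂ} (hA : A.IsHermitian) :
    projNonneg A * A = matPos A := by
  have key : ((hA.eigenvectorUnitary : Matrix n n ℂ) *
      Matrix.diagonal (fun i => if 0 ≤ hA.eigenvalues i then (1 : ℂ) else 0) *
      star (hA.eigenvectorUnitary : Matrix n n ℂ)) *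
      ((hA.eigenvectorUnitary : Matrix n n ℂ) *
      Matrix.diagonal (RCLike.ofReal ∘ hA.eigenvalues) *
      star (hA.eigenvectorUnitary : Matrix n n ℂ))
      = (hA.eigenvectorUnitary : Matrix n n ℂ) *
      Matrix.diagonal (fun i => ((max (hA.eigenvalues i) 0 : ℝ) : ℂ)) *
      star (hA.eigenvectorUnitary : Matrix n n ℂ) := by
    simp only [Matrix.mul_assoc]
    rw [← Matrix.mul_assoc (star (hA.eigenvectorUnitary : Matrix n n ℂ)), aux_star_mul_self,
      Matrix.one_mul, ← Matrix.mul_assoc (Matrix.diagonal _), Matrix.diagonal_mul_diagonal]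
    have hdiag : (fun i => (if 0 ≤ hA.eigenvalues i then (1 : ℂ) else 0)
          * (RCLike.ofReal ∘ hA.eigenvalues) i)
        = fun i => ((max (hA.eigenvalues i) 0 : ℝ) : ℂ) := by
      funext i
      by_cases h : 0 ≤ hA.eigenvalues i
      · simp [h, max_eq_left h]
      · simp [h, max_eq_right (le_of_lt (lt_of_not_ge h))]
    rw [hdiag]
  rw [projNonneg, dif_pos hA, matPos, dif_pos hA, ← key]
  congr 1
  exact hA.spectral_theorem

lemma aux_trace_re_nonneg {A : Matrix n n ℂ} (hA : A.PosSemidef) : 0 ≤ A.trace.re := by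
  rw [aux_trace_eq_sum_eig hA.1, Complex.re_sum]
  exact Finset.sum_nonneg fun i _ => by simpa using hA.eigenvalues_nonneg i

open scoped MatrixOrder in
lemma aux_trace_mul_re_nonneg {A B : Matrix n n ℂ} (hA : A.PosSemidef) (hB : B.PosSemidef) :
    0 ≤ (A * B).trace.re := by
  have h1 : (A * B).trace = (CFC.sqrt B * A * CFC.sqrt B).trace := by
    conv_lhs => rw [← CFC.sqrt_mul_sqrt_self B hB.nonneg]
    rw [← Matrix.mul_assoc, Matrix.trace_mul_cycle]
  rw [h1]
  have h2 : (CFC.sqrt B * A * CFC.sqrt B).PosSemidef := by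
    have := hA.mul_mul_conjTranspose_same (CFC.sqrt B)
    rwa [(CFC.sqrt_nonneg B).posSemidef.1] at this
  exact aux_trace_re_nonneg h2

lemma aux_trace_mul_le_trPos {P B : Matrix n n ℂ} (hP : P.PosSemidef)
    (hP1 : ((1 : Matrix n n ℂ) - P).PosSemidef) (hB : B.IsHermitian) :
    (P * B).trace.re ≤ trPos B := by
  have e1 : (P * B).trace.re = (P * matPos B).trace.re - (P * (matPos B - B)).trace.re := by
    rw [Matrix.mul_sub, Matrix.trace_sub, Complex.sub_re]
    ring
  have e2 : (P * matPos B).trace.re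
      = (matPos B).trace.re - (((1 : Matrix n n ℂ) - P) * matPos B).trace.re := by
    rw [Matrix.sub_mul, Matrix.one_mul, Matrix.trace_sub, Complex.sub_re]
    ring
  have h1 := aux_trace_mul_re_nonneg hP (aux_matPos_sub_posSemidef hB)
  have h2 := aux_trace_mul_re_nonneg hP1 (aux_matPos_posSemidef hB)
  have : trPos B = (matPos B).trace.re := rfl
  linarith

lemma aux_trPos_mono {A B : Matrix n n ℂ} (hA : A.IsHermitian) (hB : B.IsHermitian)
    (h : (B - A).PosSemidef) : trPos A ≤ trPos B := by
  have e : trPos A = (projNonneg A * A).trace.re := by rw [aux_proj_mul_eq_matPos hA]; rfl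
  have e2 : (projNonneg A * A).trace.re
      = (projNonneg A * B).trace.re - (projNonneg A * (B - A)).trace.re := by
    rw [Matrix.mul_sub, Matrix.trace_sub, Complex.sub_re]
    ring
  have h1 := aux_trace_mul_re_nonneg (aux_projNonneg_posSemidef hA) h
  have h2 := aux_trace_mul_le_trPos (aux_projNonneg_posSemidef hA)
    (aux_one_sub_projNonneg_posSemidef hA) hB
  linarith

lemma aux_trPos_eq_zero {A : Matrix n n ℂ} (h : (-A).PosSemidef) : trPos A = 0 := by
  have hA : A.IsHermitian := by simpa using h.1.neg
  rw [aux_trPos_eq_sum hA]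
  refine Finset.sum_eq_zero fun i _ => max_eq_right ?_
  rw [hA.eigenvalues_eq]
  have h2 := h.re_dotProduct_nonneg ⇑(hA.eigenvectorBasis i)
  rw [Matrix.neg_mulVec, dotProduct_neg, map_neg] at h2
  linarith

lemma aux_trace_re_le_trPos {A : Matrix n n ℂ} (hA : A.IsHermitian) : A.trace.re ≤ trPos A := by
  rw [aux_trPos_eq_sum hA, aux_trace_eq_sum_eig hA, Complex.re_sum]
  exact Finset.sum_le_sum fun i _ => by simpa using le_max_left (hA.eigenvalues i) 0

lemma aux_posSemidef_real_smul {A : Matrix n n ℂ} (hA : A.PosSemidef) {c : ℝ} (hc : 0 ≤ c) :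
    (c • A).PosSemidef := by
  refine Matrix.posSemidef_iff_dotProduct_mulVec.2 ⟨?_, fun x => ?_⟩
  · rw [Matrix.IsHermitian, Matrix.conjTranspose_smul, star_trivial, hA.1]
  · rw [Matrix.smul_mulVec, dotProduct_smul]
    rw [Complex.real_smul]
    exact mul_nonneg (Complex.zero_le_real.2 hc) (hA.dotProduct_mulVec_nonneg x)

lemma aux_real_smul_re (r : ℝ) (z : ℂ) : (r • z).re = r * z.re := by
  simp [Complex.real_smul, Complex.mul_re]

lemma aux_herm_smul {σ : Matrix n n ℂ} (hσ : σ.IsHermitian) (c : ℝ) : (c • σ).IsHermitian := by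
  rw [Matrix.IsHermitian, Matrix.conjTranspose_smul, star_trivial, hσ]

lemma aux_smul_one (c : ℝ) (U : Matrix.unitaryGroup n ℂ) :
    c • (1 : Matrix n n ℂ) = (U : Matrix n n ℂ) * Matrix.diagonal (fun _ => (c : ℂ))
      * star (U : Matrix n n ℂ) := by
  have h : Matrix.diagonal (fun _ : n => (c : ℂ)) = c • (1 : Matrix n n ℂ) := by
    ext i j
    by_cases h : i = j <;> simp [Matrix.diagonal_apply, Matrix.one_apply, h]
  rw [h, Matrix.mul_smul, Matrix.mul_one, Matrix.smul_mul, aux_mul_star_self]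

lemma aux_sub_smul_one_posSemidef {σ : Matrix n n ℂ} (hσ : σ.IsHermitian) {c : ℝ}
    (hc : ∀ i, c ≤ hσ.eigenvalues i) : (σ - c • 1).PosSemidef := by
  have h : σ - c • (1 : Matrix n n ℂ) = (hσ.eigenvectorUnitary : Matrix n n ℂ) *
      Matrix.diagonal ((RCLike.ofReal ∘ hσ.eigenvalues) - fun _ => (c : ℂ)) *
      star (hσ.eigenvectorUnitary : Matrix n n ℂ) := by
    rw [← aux_conj_sub_conj, ← aux_smul_one c hσ.eigenvectorUnitary]
    congr 1
    exact hσ.spectral_theorem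
  rw [h]
  refine aux_conj_diag_posSemidef _ fun i => ?_
  simp only [Pi.sub_apply, Function.comp_apply]
  have hco : (RCLike.ofReal (hσ.eigenvalues i) : ℂ) = ((hσ.eigenvalues i : ℝ) : ℂ) := rfl
  rw [hco, ← Complex.ofReal_sub]
  exact Complex.zero_le_real.2 (by linarith [hc i])

lemma aux_one_sub_posSemidef {ρ : Matrix n n ℂ} (hρ : ρ.PosSemidef)
    (h1 : ∀ i, hρ.1.eigenvalues i ≤ 1) : ((1 : Matrix n n ℂ) - ρ).PosSemidef := by
  have h : (1 : Matrix n n ℂ) - ρ = (hρ.1.eigenvectorUnitary : Matrix n n ℂ) *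
      Matrix.diagonal ((fun _ => (1 : ℂ)) - (RCLike.ofReal ∘ hρ.1.eigenvalues)) *
      star (hρ.1.eigenvectorUnitary : Matrix n n ℂ) := by
    rw [← aux_conj_sub_conj]
    have e1 : (1 : Matrix n n ℂ) = (hρ.1.eigenvectorUnitary : Matrix n n ℂ) *
        Matrix.diagonal (fun _ : n => (1 : ℂ)) * star (hρ.1.eigenvectorUnitary : Matrix n n ℂ) := by
      have := aux_smul_one 1 hρ.1.eigenvectorUnitary
      simpa using this
    rw [← e1]
    congr 1
    exact hρ.1.spectral_theorem
  rw [h]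
  refine aux_conj_diag_posSemidef _ fun i => ?_
  simp only [Pi.sub_apply, Function.comp_apply]
  have hco : (RCLike.ofReal (hρ.1.eigenvalues i) : ℂ) = ((hρ.1.eigenvalues i : ℝ) : ℂ) := rfl
  rw [hco, ← Complex.ofReal_one, ← Complex.ofReal_sub]
  exact Complex.zero_le_real.2 (by linarith [h1 i])

lemma aux_strict {ρ σ : Matrix n n ℂ} (hρ : ρ.IsHermitian) (hσ : σ.PosSemidef)
    {c : ℝ} (hc : 0 < c) (hσc : (σ - c • 1).PosSemidef)
    {s t : ℝ} (hst : s < t) (hpos : 0 < trPos (ρ - t • σ)) :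
    trPos (ρ - t • σ) < trPos (ρ - s • σ) := by
  have hC' : (ρ - t • σ).IsHermitian := hρ.sub (aux_herm_smul hσ.1 t)
  have hCs : (ρ - s • σ).IsHermitian := hρ.sub (aux_herm_smul hσ.1 s)
  set P := projNonneg (ρ - t • σ) with hP
  have hPpsd := aux_projNonneg_posSemidef hC'
  have hP1 := aux_one_sub_projNonneg_posSemidef hC'
  have e0 : (P * (ρ - t • σ)).trace.re = trPos (ρ - t • σ) := by
    rw [hP, aux_proj_mul_eq_matPos hC']; rfl
  have eC : ρ - t • σ = (ρ - s • σ) - (t - s) • σ := by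
    rw [sub_smul, sub_sub_sub_cancel_right]
  have esplit : (P * (ρ - t • σ)).trace.re
      = (P * (ρ - s • σ)).trace.re - (t - s) * (P * σ).trace.re := by
    rw [eC, Matrix.mul_sub, Matrix.mul_smul, Matrix.trace_sub, Matrix.trace_smul,
      Complex.sub_re, aux_real_smul_re]
  have bound1 : (P * (ρ - s • σ)).trace.re ≤ trPos (ρ - s • σ) :=
    aux_trace_mul_le_trPos hPpsd hP1 hCs
  have eq2 : (P * σ).trace.re = (P * (σ - c • 1)).trace.re + c * P.trace.re := by
    rw [Matrix.mul_sub, Matrix.mul_smul, Matrix.mul_one, Matrix.trace_sub, Matrix.trace_smul,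
      Complex.sub_re, aux_real_smul_re]
    ring
  have hnn := aux_trace_mul_re_nonneg hPpsd hσc
  -- 1 ≤ P.trace.re
  obtain ⟨i, hi⟩ : ∃ i, 0 < hC'.eigenvalues i := by
    by_contra hcon
    push_neg at hcon
    rw [aux_trPos_eq_sum hC'] at hpos
    have hz : ∑ i, max (hC'.eigenvalues i) 0 = 0 :=
      Finset.sum_eq_zero fun i _ => max_eq_right (hcon i)
    linarith
  have hPtr : P.trace.re = ∑ j, (if 0 ≤ hC'.eigenvalues j then (1 : ℝ) else 0) := by
    rw [hP, projNonneg, dif_pos hC', aux_trace_conj_diag, Complex.re_sum]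
    congr 1
    funext j
    split_ifs <;> simp
  have hPtr1 : 1 ≤ P.trace.re := by
    rw [hPtr]
    have := Finset.single_le_sum (f := fun j => if 0 ≤ hC'.eigenvalues j then (1 : ℝ) else 0)
      (fun j _ => by split_ifs <;> norm_num) (Finset.mem_univ i)
    rw [if_pos hi.le] at this
    exact this
  nlinarith [mul_le_mul_of_nonneg_left hPtr1 hc.le]

end helpers

/-- `D̲_s^ε(ρ‖σ) = D̄_s^{1−ε}(ρ‖σ)` for a state `ρ`, positive definite `σ` and `ε ∈ (0,1)`. -/
theorem Dlow_eq_Dhigh_one_sub {d : ℕ} (ρ σ : Matrix (Fin d) (Fin d) ℂ)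
    (hρ : ρ.PosSemidef) (hρtr : ρ.trace = 1) (hσ : σ.PosDef)
    (ε : ℝ) (hε0 : 0 < ε) (hε1 : ε < 1) :
    Dlow ε ρ σ = Dhigh (1 - ε) ρ σ := by
  rcases Nat.eq_zero_or_pos d with hd | hd
  · subst hd
    have htr : ∀ γ : ℝ, trPos (ρ - (2 : ℝ) ^ γ • σ) = 0 := fun γ => by
      simp [trPos, Matrix.trace]
    have hA : {γ : ℝ | 1 - ε ≤ trPos (ρ - (2 : ℝ) ^ γ • σ)} = ∅ := by
      ext γ
      simp only [Set.mem_setOf_eq, Set.mem_empty_iff_false, iff_false, not_le, htr γ]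
      linarith
    have hB : {γ : ℝ | trPos (ρ - (2 : ℝ) ^ γ • σ) ≤ 1 - ε} = Set.univ := by
      ext γ
      simp only [Set.mem_setOf_eq, Set.mem_univ, iff_true, htr γ]
      linarith
    rw [Dlow, Dhigh, hA, hB, Real.sSup_empty]
    have hnb : ¬BddBelow (Set.univ : Set ℝ) := by
      rintro ⟨x, hx⟩
      have := hx (Set.mem_univ (x - 1))
      linarith
    rw [Real.sInf_of_not_bddBelow hnb]
  · -- main case
    have hherm : ∀ s : ℝ, (ρ - s • σ).IsHermitian :=
      fun s => hρ.1.sub (aux_herm_smul hσ.1 s)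
    have hmono : ∀ {γ γ' : ℝ}, γ ≤ γ' →
        trPos (ρ - (2 : ℝ) ^ γ' • σ) ≤ trPos (ρ - (2 : ℝ) ^ γ • σ) := by
      intro γ γ' h
      refine aux_trPos_mono (hherm _) (hherm _) ?_
      have he : (ρ - (2 : ℝ) ^ γ • σ) - (ρ - (2 : ℝ) ^ γ' • σ)
          = ((2 : ℝ) ^ γ' - (2 : ℝ) ^ γ) • σ := by
        rw [sub_smul, sub_sub_sub_cancel_left]
      rw [he]
      exact aux_posSemidef_real_smul hσ.posSemidef
        (sub_nonneg.2 ((Real.rpow_le_rpow_left_iff one_lt_two).2 h))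
    -- minimum eigenvalue of σ
    have hne : Nonempty (Fin d) := ⟨⟨0, hd⟩⟩
    obtain ⟨i₀, -, hi₀⟩ := Finset.exists_min_image Finset.univ hσ.1.eigenvalues
      Finset.univ_nonempty
    set c := hσ.1.eigenvalues i₀ with hcdef
    have hc : 0 < c := hσ.eigenvalues_pos i₀
    have hσc : (σ - c • 1).PosSemidef :=
      aux_sub_smul_one_posSemidef hσ.1 (fun i => hi₀ i (Finset.mem_univ i))
    have hstrict : ∀ {γ γ' : ℝ}, γ < γ' → 0 < trPos (ρ - (2 : ℝ) ^ γ' • σ) →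
        trPos (ρ - (2 : ℝ) ^ γ' • σ) < trPos (ρ - (2 : ℝ) ^ γ • σ) := by
      intro γ γ' h hpos
      exact aux_strict hρ.1 hσ.posSemidef hc hσc
        ((Real.rpow_lt_rpow_left_iff one_lt_two).2 h) hpos
    -- eigenvalues of ρ sum to 1
    have hsum1 : ∑ i, hρ.1.eigenvalues i = 1 := by
      have h := aux_trace_eq_sum_eig hρ.1
      rw [hρtr] at h
      exact_mod_cast h.symm
    have hρ1 : ((1 : Matrix (Fin d) (Fin d) ℂ) - ρ).PosSemidef := by
      refine aux_one_sub_posSemidef hρ (fun i => ?_)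
      have h := Finset.single_le_sum (f := hρ.1.eigenvalues)
        (fun j _ => hρ.eigenvalues_nonneg j) (Finset.mem_univ i)
      rw [hsum1] at h
      exact h
    -- the point γB where trPos vanishes
    have hcinv : (0 : ℝ) < c⁻¹ := inv_pos.2 hc
    have hPSD : (c⁻¹ • σ - ρ).PosSemidef := by
      have he : c⁻¹ • σ - ρ = c⁻¹ • (σ - c • 1) + ((1 : Matrix (Fin d) (Fin d) ℂ) - ρ) := by
        rw [smul_sub, smul_smul, inv_mul_cancel₀ hc.ne', one_smul]
        abel
      rw [he]
      exact (aux_posSemidef_real_smul hσc hcinv.le).add hρ1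
    set γB := Real.logb 2 c⁻¹ with hγBdef
    have hgB : trPos (ρ - (2 : ℝ) ^ γB • σ) = 0 := by
      have h2 : (2 : ℝ) ^ γB = c⁻¹ :=
        Real.rpow_logb (by norm_num) (by norm_num) hcinv
      rw [h2]
      exact aux_trPos_eq_zero (by rw [neg_sub]; exact hPSD)
    -- lower bound for trPos
    set T := σ.trace.re with hTdef
    have hT : 0 ≤ T := aux_trace_re_nonneg hσ.posSemidef
    have hlow : ∀ γ : ℝ, 1 - (2 : ℝ) ^ γ * T ≤ trPos (ρ - (2 : ℝ) ^ γ • σ) := by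
      intro γ
      have h := aux_trace_re_le_trPos (hherm ((2 : ℝ) ^ γ))
      rw [Matrix.trace_sub, Matrix.trace_smul, Complex.sub_re, aux_real_smul_re, hρtr] at h
      simpa using h
    set γA := Real.logb 2 (ε / (T + 1)) with hγAdef
    have hgA : 1 - ε < trPos (ρ - (2 : ℝ) ^ γA • σ) := by
      have harg : 0 < ε / (T + 1) := div_pos hε0 (by linarith)
      have h2 : (2 : ℝ) ^ γA = ε / (T + 1) :=
        Real.rpow_logb (by norm_num) (by norm_num) harg
      have hlt : (2 : ℝ) ^ γA * T < ε := by
        rw [h2, div_mul_eq_mul_div, div_lt_iff₀ (by linarith)]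
        nlinarith
      have := hlow γA
      linarith
    -- the sets
    have hS1ne : {γ : ℝ | 1 - ε ≤ trPos (ρ - (2 : ℝ) ^ γ • σ)}.Nonempty := ⟨γA, hgA.le⟩
    have hS2ne : {γ : ℝ | trPos (ρ - (2 : ℝ) ^ γ • σ) ≤ 1 - ε}.Nonempty :=
      ⟨γB, by rw [Set.mem_setOf_eq, hgB]; linarith⟩
    have hS1bdd : BddAbove {γ : ℝ | 1 - ε ≤ trPos (ρ - (2 : ℝ) ^ γ • σ)} := by
      refine ⟨γB, fun γ hγ => ?_⟩
      by_contra hcon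
      push_neg at hcon
      have h1 := hmono hcon.le
      rw [hgB] at h1
      rw [Set.mem_setOf_eq] at hγ
      linarith
    have hS2bdd : BddBelow {γ : ℝ | trPos (ρ - (2 : ℝ) ^ γ • σ) ≤ 1 - ε} := by
      refine ⟨γA, fun γ hγ => ?_⟩
      by_contra hcon
      push_neg at hcon
      have h1 := hmono hcon.le
      rw [Set.mem_setOf_eq] at hγ
      linarith
    rw [Dlow, Dhigh]
    apply le_antisymm
    · by_contra hcon
      push_neg at hcon
      obtain ⟨x, hx1, hx2⟩ := exists_between hcon
      obtain ⟨y, hy1, hy2⟩ := exists_between hx2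
      obtain ⟨γ₁, hγ₁S, hγ₁⟩ := exists_lt_of_lt_csSup hS1ne hy2
      rw [Set.mem_setOf_eq] at hγ₁S
      have hyA : 1 - ε ≤ trPos (ρ - (2 : ℝ) ^ y • σ) := le_trans hγ₁S (hmono hγ₁.le)
      obtain ⟨γ₂, hγ₂S, hγ₂⟩ := exists_lt_of_csInf_lt hS2ne hx1
      rw [Set.mem_setOf_eq] at hγ₂S
      have hxB : trPos (ρ - (2 : ℝ) ^ x • σ) ≤ 1 - ε := le_trans (hmono hγ₂.le) hγ₂S
      have hstr := hstrict hy1 (by linarith)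
      linarith
    · by_contra hcon
      push_neg at hcon
      obtain ⟨x, hx1, hx2⟩ := exists_between hcon
      have h1 : x ∉ {γ : ℝ | 1 - ε ≤ trPos (ρ - (2 : ℝ) ^ γ • σ)} :=
        fun h => absurd (le_csSup hS1bdd h) (not_le.2 hx1)
      have h2 : x ∉ {γ : ℝ | trPos (ρ - (2 : ℝ) ^ γ • σ) ≤ 1 - ε} :=
        fun h => absurd (csInf_le hS2bdd h) (not_le.2 hx2)
      rw [Set.mem_setOf_eq] at h1 h2
      push_neg at h1 h2
      linarith
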